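/- The multiplicity of −1 as a root of the characteristic polynomial of the Seidel matrix S equals (s_1 + s_2 + ⋯ + s_k) − k if t_k > 1, and equals (s_1 + s_2 + ⋯ + s_k) − k + 1 if t_k = 1. -/

import Mathlib

open Polynomial Matrix

theorem my_charpoly_conj (n : ℕ) (U V A : Matrix (Fin n) (Fin n) ℝ) (h1 : U * V = 1) :
    (U * A * V).charpoly = A.charpoly := by
  unfold Matrix.charpoly
  have hmapmul : ∀ (P Q : Matrix (Fin n) (Fin n) ℝ),
      (P * Q).map (C : ℝ → ℝ[X]) = P.map C * Q.map C := by
    intro P Q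
    exact Matrix.map_mul (f := (C : ℝ →+* ℝ[X]))
  have hc : charmatrix (U * A * V) = (U.map C) * charmatrix A * (V.map C) := by
    unfold charmatrix
    rw [Matrix.mul_sub, Matrix.sub_mul]
    congr 1
    · have h2 : U.map (C : ℝ → ℝ[X]) * Matrix.scalar (Fin n) X * V.map C
          = Matrix.scalar (Fin n) X * (U.map C * V.map C) := by
        rw [← (Matrix.scalar_commute (X : ℝ[X]) (fun r' => Commute.all _ _) (U.map C)).eq,
          mul_assoc]
      rw [h2, ← hmapmul, h1]
      simp
    · show C.mapMatrix (U * A * V) = _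
      rw [_root_.map_mul, _root_.map_mul]
      rfl
  rw [hc, det_mul, det_mul, mul_comm, ← mul_assoc, ← det_mul, ← hmapmul,
    mul_eq_one_comm.mp h1]
  simp

theorem herm_mult (n : ℕ) (A : Matrix (Fin n) (Fin n) ℝ) (hA : A.IsHermitian) (μ : ℝ) :
    A.charpoly.rootMultiplicity μ
      = Module.finrank ℝ (LinearMap.ker (A - μ • (1 : Matrix (Fin n) (Fin n) ℝ)).mulVecLin) := by
  classical
  set U : Matrix (Fin n) (Fin n) ℝ := (hA.eigenvectorUnitary : Matrix (Fin n) (Fin n) ℝ) with hU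
  have hUV : U * star U = 1 := by
    exact (Matrix.mem_unitaryGroup_iff.mp hA.eigenvectorUnitary.2)
  have hdiag : (diagonal ((RCLike.ofReal : ℝ → ℝ) ∘ hA.eigenvalues)) = diagonal hA.eigenvalues := by
    congr 1
  have hspec : A = U * diagonal hA.eigenvalues * star U := by
    rw [← hdiag]; exact hA.spectral_theorem
  -- charpoly
  have hcp : A.charpoly = ∏ i : Fin n, (X - C (hA.eigenvalues i)) := by
    conv_lhs => rw [hspec]
    rw [my_charpoly_conj n U (star U) _ hUV]
    rw [Matrix.charpoly_of_upperTriangular _ (Matrix.blockTriangular_diagonal _)]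
    simp
  -- root multiplicity as count
  have hroots : (A.charpoly).roots = (Finset.univ.val.map hA.eigenvalues) := by
    rw [hcp, ← Polynomial.roots_multiset_prod_X_sub_C (Finset.univ.val.map hA.eigenvalues)]
    congr 1
    rw [Multiset.map_map]
    rfl
  have hmult : A.charpoly.rootMultiplicity μ
      = (Finset.univ.filter (fun i => hA.eigenvalues i = μ)).card := by
    rw [← Polynomial.count_roots, hroots, Multiset.count_map]
    simp only [Finset.card, Finset.filter_val]
    congr 1
    apply Multiset.filter_congr
    intro x _
    exact eq_comm
  -- rank part
  have hUdet : IsUnit U.det ∧ IsUnit (star U).det := by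
    have h := congrArg Matrix.det hUV
    rw [Matrix.det_mul, Matrix.det_one] at h
    exact ⟨IsUnit.of_mul_eq_one _ h, IsUnit.of_mul_eq_one _ (by rwa [mul_comm] at h)⟩
  have hBspec : A - μ • (1 : Matrix (Fin n) (Fin n) ℝ)
      = U * diagonal (fun i => hA.eigenvalues i - μ) * star U := by
    have h1 : U * (μ • (1 : Matrix (Fin n) (Fin n) ℝ)) * star U = μ • (1 : Matrix (Fin n) (Fin n) ℝ) := by
      rw [Matrix.mul_smul, Matrix.smul_mul, Matrix.mul_one, hUV]
    have h2 : diagonal (fun i => hA.eigenvalues i - μ)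
        = diagonal hA.eigenvalues - μ • (1 : Matrix (Fin n) (Fin n) ℝ) := by
      ext i j
      by_cases h : i = j <;>
        simp [Matrix.diagonal_apply, Matrix.one_apply, Matrix.sub_apply, h]
    rw [h2, Matrix.mul_sub, Matrix.sub_mul, h1, ← hspec]
  have hrank : (A - μ • (1 : Matrix (Fin n) (Fin n) ℝ)).rank
      = (Finset.univ.filter (fun i => ¬ (hA.eigenvalues i = μ))).card := by
    rw [hBspec, Matrix.rank_mul_eq_left_of_isUnit_det _ _ hUdet.2,
      Matrix.rank_mul_eq_right_of_isUnit_det _ _ hUdet.1, Matrix.rank_diagonal]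
    rw [Fintype.card_subtype]
    congr 1
    apply Finset.filter_congr
    intro x _
    constructor
    · intro h h'; exact h (by rw [h']; ring)
    · intro h h'; rw [sub_eq_zero] at h'; exact h h'
  have hrn := LinearMap.finrank_range_add_finrank_ker
    (A - μ • (1 : Matrix (Fin n) (Fin n) ℝ)).mulVecLin
  rw [Module.finrank_pi] at hrn
  have hcards := Finset.card_filter_add_card_filter_not
    (s := (Finset.univ : Finset (Fin n))) (p := fun i => hA.eigenvalues i = μ)
  rw [hmult]
  have hrr : (A - μ • (1 : Matrix (Fin n) (Fin n) ℝ)).rank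
      = Module.finrank ℝ (LinearMap.range (A - μ • (1 : Matrix (Fin n) (Fin n) ℝ)).mulVecLin) := rfl
  rw [← hrr, hrank] at hrn
  simp only [Fintype.card_fin, Finset.card_univ] at hrn hcards
  omega

namespace Stmt10

def pad (n : ℕ) (x : Fin n → ℝ) (m : ℕ) : ℝ := if h : m < n then x ⟨m, h⟩ else 0

def sig (n : ℕ) (x : Fin n → ℝ) (m : ℕ) : ℝ := ∑ j ∈ Finset.range m, pad n x j

lemma sig_succ (n : ℕ) (x : Fin n → ℝ) (m : ℕ) :
    sig n x (m + 1) = sig n x m + pad n x m := Finset.sum_range_succ _ _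

lemma two_point_sum (j p m : ℕ) (a b : ℝ) (h : j ≠ p) :
    ∑ i ∈ Finset.range m, (if i = j then a else if i = p then b else 0)
      = (if j < m then a else 0) + (if p < m then b else 0) := by
  have h1 : ∀ i, (if i = j then a else if i = p then b else 0)
      = (if i = j then a else 0) + (if i = p then b else 0) := by
    intro i
    by_cases h1 : i = j
    · subst h1; rw [if_pos rfl, if_pos rfl, if_neg h, add_zero]
    · rw [if_neg h1, if_neg h1, zero_add]
  rw [Finset.sum_congr rfl (fun i _ => h1 i), Finset.sum_add_distrib,
    Finset.sum_ite_eq' (Finset.range m) j (fun _ => a),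
    Finset.sum_ite_eq' (Finset.range m) p (fun _ => b)]
  simp [Finset.mem_range]

def tpv (n : ℕ) (j p : ℕ) (a b : ℝ) : Fin n → ℝ :=
  fun i => if (i : ℕ) = j then a else if (i : ℕ) = p then b else 0

lemma pad_tpv (n j p : ℕ) (a b : ℝ) (hj : j < n) (hp : p < n) (m : ℕ) :
    pad n (tpv n j p a b) m = if m = j then a else if m = p then b else 0 := by
  rw [pad]
  by_cases h : m < n
  · rw [dif_pos h]; rfl
  · rw [dif_neg h, if_neg (by omega), if_neg (by omega)]

lemma sig_tpv (n j p : ℕ) (a b : ℝ) (hj : j < n) (hp : p < n) (hjp : j ≠ p) (m : ℕ) :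
    sig n (tpv n j p a b) m = (if j < m then a else 0) + (if p < m then b else 0) := by
  rw [sig, Finset.sum_congr rfl (fun i _ => pad_tpv n j p a b hj hp i),
    two_point_sum j p m a b hjp]

def Cond (n k : ℕ) (B : ℕ → ℕ) (x : Fin n → ℝ) : Prop :=
  (∀ l i, 1 ≤ l → l ≤ k → B (2*l-1) ≤ i → i+1 < B (2*l) → pad n x i = pad n x (i+1)) ∧
  (∀ l, 1 ≤ l → l ≤ k → sig n x (B (2*l-1)) = pad n x (B (2*l-1))) ∧
  (∀ l, 1 ≤ l → l ≤ k-1 → sig n x (B (2*l) - 1) = 0) ∧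
  sig n x (n-1) = pad n x (n-1)

def Pfree (n k tk : ℕ) (B : ℕ → ℕ) (v : ℕ) : Prop :=
  (∃ l, 1 ≤ l ∧ l ≤ k ∧ B (2*l-2) ≤ v ∧ v+1 < B (2*l-1)) ∨ (tk = 1 ∧ v = n-1)

section Main

variable (k n : ℕ) (B : ℕ → ℕ) (β : ℕ → ℝ) (M : Matrix (Fin n) (Fin n) ℝ)

/-- The row formula for the matrix-vector product. -/
theorem row_formula
    (hM : ∀ a b : Fin n, M a b = if a = b then 1 else β (max a.val b.val + 1))
    (x : Fin n → ℝ) (i : ℕ) (hi : i < n) :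
    (M *ᵥ x) ⟨i, hi⟩ = β (i+1) * sig n x i + pad n x i
      + ∑ j ∈ Finset.Ico (i+1) n, β (j+1) * pad n x j := by
  have h0 : (M *ᵥ x) ⟨i, hi⟩ = ∑ j : Fin n, M ⟨i, hi⟩ j * x j := by
    simp [Matrix.mulVec, dotProduct]
  set f : ℕ → ℝ := fun m => if m = i then pad n x m else β (max i m + 1) * pad n x m with hf
  have h1 : (M *ᵥ x) ⟨i, hi⟩ = ∑ m ∈ Finset.range n, f m := by
    rw [h0, ← Fin.sum_univ_eq_sum_range]
    apply Finset.sum_congr rfl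
    intro j _
    rw [hM]
    by_cases h : (j : ℕ) = i
    · have hji : (⟨i, hi⟩ : Fin n) = j := by exact Fin.ext h.symm
      simp only [hji, if_pos rfl, hf, h, if_pos, one_mul]
      simp only [pad]
      rw [dif_pos hi, hji]
    · have : (⟨i, hi⟩ : Fin n) ≠ j := fun hc => h (by rw [← hc])
      simp only [if_neg this, hf, if_neg h]
      simp [pad]
  have hsplit : ∑ m ∈ Finset.range n, f m
      = (∑ m ∈ Finset.range (i+1), f m) + ∑ m ∈ Finset.Ico (i+1) n, f m := by
    rw [Finset.range_eq_Ico, ← Finset.sum_Ico_consecutive _ (Nat.zero_le (i+1)) hi,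
      ← Finset.range_eq_Ico]
  have h2 : ∑ m ∈ Finset.range (i+1), f m = β (i+1) * sig n x i + pad n x i := by
    rw [Finset.sum_range_succ]
    congr 1
    · rw [sig, Finset.mul_sum]
      apply Finset.sum_congr rfl
      intro m hm
      have hmi : m < i := Finset.mem_range.mp hm
      rw [hf]
      simp only [if_neg (Nat.ne_of_lt hmi)]
      rw [Nat.max_eq_left (le_of_lt hmi)]
    · simp [hf]
  have h3 : ∑ m ∈ Finset.Ico (i+1) n, f m = ∑ j ∈ Finset.Ico (i+1) n, β (j+1) * pad n x j := by
    apply Finset.sum_congr rfl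
    intro m hm
    have : i < m := (Finset.mem_Ico.mp hm).1
    rw [hf]
    simp only [if_neg (by omega : ¬ m = i)]
    rw [Nat.max_eq_right (le_of_lt this)]
  rw [h1, hsplit, h2, h3]

theorem diff_formula
    (hM : ∀ a b : Fin n, M a b = if a = b then 1 else β (max a.val b.val + 1))
    (x : Fin n → ℝ) (i : ℕ) (h1 : i < n) (h2 : i + 1 < n) :
    (M *ᵥ x) ⟨i, h1⟩ - (M *ᵥ x) ⟨i+1, h2⟩
      = (β (i+1) - β (i+2)) * sig n x i + (1 - β (i+2)) * (pad n x i - pad n x (i+1)) := by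
  rw [row_formula (n := n) (β := β) (M := M) hM x i h1, row_formula (n := n) (β := β) (M := M) hM x (i+1) h2]
  rw [Finset.sum_eq_sum_Ico_succ_bot h2 (fun j => β (j+1) * pad n x j)]
  rw [sig_succ]
  ring_nf

theorem find_block (hB0 : B 0 = 0) (hn : B (2*k) = n) (j : ℕ) (hj : j < n) :
    ∃ p, 1 ≤ p ∧ p ≤ 2*k ∧ B (p-1) ≤ j ∧ j < B p := by
  have hex : ∃ p, j < B p := ⟨2*k, by omega⟩
  have hp : j < B (Nat.find hex) := Nat.find_spec hex
  have hple : Nat.find hex ≤ 2*k := Nat.find_min' hex (by omega)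
  have hp1 : 1 ≤ Nat.find hex := by
    rcases Nat.eq_zero_or_pos (Nat.find hex) with h | h
    · rw [h] at hp; omega
    · omega
  refine ⟨Nat.find hex, hp1, hple, ?_, hp⟩
  by_contra hcon
  push_neg at hcon
  exact Nat.find_min hex (by omega : Nat.find hex - 1 < Nat.find hex) hcon

theorem ker_iff
    (hk : 1 ≤ k)
    (hB0 : B 0 = 0) (hn : B (2*k) = n)
    (hmono : ∀ p q, p ≤ q → q ≤ 2*k → B p ≤ B q)
    (hlt : ∀ p q, p < q → q ≤ 2*k → B p < B q)
    (hβ1 : ∀ l, 1 ≤ l → l ≤ k → ∀ j, B (2*l-2) < j → j ≤ B (2*l-1) → β j = 1)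
    (hβ2 : ∀ l, 1 ≤ l → l ≤ k → ∀ j, B (2*l-1) < j → j ≤ B (2*l) → β j = -1)
    (hM : ∀ a b : Fin n, M a b = if a = b then 1 else β (max a.val b.val + 1))
    (x : Fin n → ℝ) :
    M *ᵥ x = 0 ↔ Cond n k B x := by
  have hn1 : 1 ≤ n := by
    have := hlt 0 (2*k) (by omega) (le_refl _)
    omega
  have hβn : β n = -1 := by
    apply hβ2 k hk (le_refl _)
    · have := hlt (2*k-1) (2*k) (by omega) (le_refl _); omega
    · omega
  constructor
  · intro hx
    have hDzero : ∀ i, i + 1 < n →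
        (β (i+1) - β (i+2)) * sig n x i + (1 - β (i+2)) * (pad n x i - pad n x (i+1)) = 0 := by
      intro i h2
      have h1 : i < n := by omega
      have := diff_formula (n := n) (β := β) (M := M) hM x i h1 h2
      rw [show (M *ᵥ x) ⟨i, h1⟩ = 0 from congrFun hx _,
        show (M *ᵥ x) ⟨i+1, h2⟩ = 0 from congrFun hx _] at this
      linarith [this]
    have hR : ∀ (i : ℕ) (hi : i < n), β (i+1) * sig n x i + pad n x i
        + ∑ j ∈ Finset.Ico (i+1) n, β (j+1) * pad n x j = 0 := by
      intro i hi
      rw [← row_formula (n := n) (β := β) (M := M) hM x i hi]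
      exact congrFun hx _
    refine ⟨?_, ?_, ?_, ?_⟩
    · -- C1
      intro l i hl1 hl2 hi1 hi2
      have hin : i + 1 < n := by
        have := hmono (2*l) (2*k) (by omega) (le_refl _); omega
      have hb1 : β (i+1) = -1 := hβ2 l hl1 hl2 (i+1) (by omega) (by omega)
      have hb2 : β (i+2) = -1 := hβ2 l hl1 hl2 (i+2) (by omega) (by omega)
      have := hDzero i hin
      rw [hb1, hb2] at this
      linarith
    · -- C2
      intro l hl1 hl2
      have hBl1 : 1 ≤ B (2*l-1) := by
        have := hlt 0 (2*l-1) (by omega) (by omega); omega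
      have hBln : B (2*l-1) < n := by
        have := hlt (2*l-1) (2*k) (by omega) (le_refl _); omega
      set i := B (2*l-1) - 1 with hidef
      have hi1 : i + 1 = B (2*l-1) := by omega
      have hin : i + 1 < n := by omega
      have hb1 : β (i+1) = 1 := by
        apply hβ1 l hl1 hl2
        · have := hlt (2*l-2) (2*l-1) (by omega) (by omega); omega
        · omega
      have hb2 : β (i+2) = -1 := by
        apply hβ2 l hl1 hl2
        · omega
        · have := hlt (2*l-1) (2*l) (by omega) (by omega); omega
      have hD := hDzero i hin
      rw [hb1, hb2] at hD
      have hss : sig n x (i+1) = sig n x i + pad n x i := sig_succ n x i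
      rw [hi1] at hss
      rw [hss, hi1] at *
      linarith [hD]
    · -- C3
      intro l hl1 hl2
      have hBl1 : 1 ≤ B (2*l) := by
        have := hlt 0 (2*l) (by omega) (by omega); omega
      have hBln : B (2*l) < n := by
        have := hlt (2*l) (2*k) (by omega) (le_refl _); omega
      set i := B (2*l) - 1 with hidef
      have hi1 : i + 1 = B (2*l) := by omega
      have hin : i + 1 < n := by omega
      have hb1 : β (i+1) = -1 := by
        apply hβ2 l hl1 (by omega)
        · have := hlt (2*l-1) (2*l) (by omega) (by omega); omega
        · omega
      have hb2 : β (i+2) = 1 := by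
        have h := hβ1 (l+1) (by omega) (by omega) (i+2)
        rw [show 2*(l+1)-2 = 2*l by omega, show 2*(l+1)-1 = 2*l+1 by omega] at h
        apply h
        · omega
        · have := hlt (2*l) (2*l+1) (by omega) (by omega); omega
      have hD := hDzero i hin
      rw [hb1, hb2] at hD
      linarith [hD]
    · -- C4
      have h := hR (n-1) (by omega)
      rw [show n-1+1 = n by omega] at h
      rw [Finset.Ico_self, Finset.sum_empty, hβn] at h
      linarith [h]
  · intro hc
    obtain ⟨hc1, hc2, hc3, hc4⟩ := hc
    have hlast : ∀ (hi : n - 1 < n), (M *ᵥ x) ⟨n-1, hi⟩ = 0 := by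
      intro hi
      rw [row_formula (n := n) (β := β) (M := M) hM x (n-1) hi]
      rw [show n-1+1 = n by omega, Finset.Ico_self, Finset.sum_empty, hβn]
      linarith [hc4]
    have hdesc : ∀ d (i : ℕ) (hi : i < n), i + d = n - 1 → (M *ᵥ x) ⟨i, hi⟩ = 0 := by
      intro d
      induction d with
      | zero =>
        intro i hi he
        have : i = n - 1 := by omega
        subst this
        exact hlast hi
      | succ d ih =>
        intro i hi he
        have h2 : i + 1 < n := by omega
        have hih := ih (i+1) h2 (by omega)
        have hdf := diff_formula (n := n) (β := β) (M := M) hM x i hi h2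
        rw [hih, sub_zero] at hdf
        rw [hdf]
        -- classify the boundary at i
        obtain ⟨p, hp1, hp2, hpa, hpb⟩ := find_block k n B hB0 hn i (by omega)
        rcases Nat.even_or_odd p with ⟨l, hpe⟩ | ⟨l, hpo⟩
        · -- p = 2l even : 1-block l
          have hl1 : 1 ≤ l := by omega
          have hl2 : l ≤ k := by omega
          have hpeq : p = 2*l := by omega
          rw [hpeq] at hpa hpb
          rcases Nat.lt_or_ge (i+1) (B (2*l)) with hcase | hcase
          · -- interior of 1-block
            have hb1 : β (i+1) = -1 := hβ2 l hl1 hl2 (i+1) (by omega) (by omega)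
            have hb2 : β (i+2) = -1 := hβ2 l hl1 hl2 (i+2) (by omega) (by omega)
            rw [hb1, hb2, hc1 l i hl1 hl2 (by omega) (by omega)]
            ring
          · -- i+1 = B (2l) : end of 1-block
            have hieq : i + 1 = B (2*l) := by omega
            have hlk : l ≤ k - 1 := by
              by_contra hcon
              have : l = k := by omega
              rw [this] at hieq
              omega
            have hb1 : β (i+1) = -1 := hβ2 l hl1 hl2 (i+1) (by omega) (by omega)
            have hb2 : β (i+2) = 1 := by
              have h := hβ1 (l+1) (by omega) (by omega) (i+2)
              rw [show 2*(l+1)-2 = 2*l by omega, show 2*(l+1)-1 = 2*l+1 by omega] at h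
              apply h
              · omega
              · have := hlt (2*l) (2*l+1) (by omega) (by omega); omega
            have hsig : sig n x i = 0 := by
              have := hc3 l hl1 hlk
              rw [show B (2*l) - 1 = i by omega] at this
              exact this
            rw [hb1, hb2, hsig]
            ring
        · -- p = 2l+1 odd : 0-block (l+1)
          have hpeq : p = 2*(l+1)-1 := by omega
          have hl1 : 1 ≤ l + 1 := by omega
          have hl2 : l + 1 ≤ k := by omega
          rw [hpeq] at hpa hpb
          rw [show 2*(l+1)-1-1 = 2*(l+1)-2 by omega] at hpa
          rcases Nat.lt_or_ge (i+1) (B (2*(l+1)-1)) with hcase | hcase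
          · -- interior of 0-block
            have hb1 : β (i+1) = 1 := hβ1 (l+1) hl1 hl2 (i+1) (by omega) (by omega)
            have hb2 : β (i+2) = 1 := hβ1 (l+1) hl1 hl2 (i+2) (by omega) (by omega)
            rw [hb1, hb2]
            ring
          · -- i+1 = B (2(l+1)-1) : end of 0-block
            have hieq : i + 1 = B (2*(l+1)-1) := by omega
            have hb1 : β (i+1) = 1 := hβ1 (l+1) hl1 hl2 (i+1) (by omega) (by omega)
            have hb2 : β (i+2) = -1 := by
              apply hβ2 (l+1) hl1 hl2
              · omega
              · have := hlt (2*(l+1)-1) (2*(l+1)) (by omega) (by omega); omega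
            have h2' := hc2 (l+1) hl1 hl2
            have hss : sig n x (i+1) = sig n x i + pad n x i := sig_succ n x i
            rw [← hieq] at h2'
            rw [hss] at h2'
            rw [hb1, hb2]
            linarith [h2']
    funext i
    have : (M *ᵥ x) i = (M *ᵥ x) ⟨i.val, i.isLt⟩ := by congr
    rw [this, hdesc (n - 1 - i.val) i.val i.isLt (by omega)]
    rfl

theorem cond_zero
    (hk : 1 ≤ k) (tk : ℕ)
    (hB0 : B 0 = 0) (hn : B (2*k) = n)
    (hmono : ∀ p q, p ≤ q → q ≤ 2*k → B p ≤ B q)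
    (hlt : ∀ p q, p < q → q ≤ 2*k → B p < B q)
    (htk : B (2*k) = B (2*k-1) + tk)
    (x : Fin n → ℝ) (hc : Cond n k B x)
    (hfree : ∀ v, v < n → Pfree n k tk B v → pad n x v = 0) :
    x = 0 := by
  obtain ⟨hc1, hc2, hc3, hc4⟩ := hc
  have hn1 : 1 ≤ n := by
    have := hlt 0 (2*k) (by omega) (le_refl _); omega
  have key : ∀ l, l ≤ k → ∀ v, v < B (2*l) → pad n x v = 0 := by
    intro l
    induction l with
    | zero =>
      intro _ v hv
      rw [show 2*0 = 0 by omega, hB0] at hv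
      omega
    | succ l ih =>
      intro hlk v hv
      have IH : ∀ w, w < B (2*l) → pad n x w = 0 := ih (by omega)
      have hab : B (2*l) < B (2*(l+1)-1) := hlt _ _ (by omega) (by omega)
      have hbe : B (2*(l+1)-1) < B (2*(l+1)) := hlt _ _ (by omega) (by omega)
      have hben : B (2*(l+1)) ≤ n := by
        have := hmono (2*(l+1)) (2*k) (by omega) (le_refl _); omega
      have f1 : ∀ w, B (2*l) ≤ w → w + 1 < B (2*(l+1)-1) → pad n x w = 0 := by
        intro w h1 h2
        apply hfree w (by omega)
        exact Or.inl ⟨l+1, by omega, hlk, by rw [show 2*(l+1)-2 = 2*l by omega]; omega, h2⟩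
      have f2 : sig n x (B (2*(l+1)-1)) = pad n x (B (2*(l+1)-1) - 1) := by
        rw [sig]
        apply Finset.sum_eq_single_of_mem
        · rw [Finset.mem_range]; omega
        · intro w hw hne
          rw [Finset.mem_range] at hw
          rcases Nat.lt_or_ge w (B (2*l)) with h | h
          · exact IH w h
          · exact f1 w h (by omega)
      have f3 : pad n x (B (2*(l+1)-1)) = pad n x (B (2*(l+1)-1) - 1) := by
        rw [← hc2 (l+1) (by omega) hlk]
        exact f2
      have f4 : ∀ d i, i = B (2*(l+1)-1) + d → i < B (2*(l+1)) →
          pad n x i = pad n x (B (2*(l+1)-1) - 1) := by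
        intro d
        induction d with
        | zero => intro i h1 _; rw [show i = B (2*(l+1)-1) by omega]; exact f3
        | succ d ihd =>
          intro i h1 h2
          have hprev := ihd (B (2*(l+1)-1) + d) rfl (by omega)
          have hstep := hc1 (l+1) (B (2*(l+1)-1) + d) (by omega) hlk (by omega) (by omega)
          rw [show i = B (2*(l+1)-1) + d + 1 by omega, ← hstep]
          exact hprev
      have f4' : ∀ i, B (2*(l+1)-1) ≤ i → i < B (2*(l+1)) →
          pad n x i = pad n x (B (2*(l+1)-1) - 1) :=
        fun i h1 h2 => f4 (i - B (2*(l+1)-1)) i (by omega) h2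
      have f5 : sig n x (B (2*(l+1)) - 1) = pad n x (B (2*(l+1)-1) - 1)
          + ((B (2*(l+1)) - 1 - B (2*(l+1)-1) : ℕ) : ℝ) * pad n x (B (2*(l+1)-1) - 1) := by
        have hsplit : sig n x (B (2*(l+1)) - 1) = sig n x (B (2*(l+1)-1))
            + ∑ w ∈ Finset.Ico (B (2*(l+1)-1)) (B (2*(l+1)) - 1), pad n x w := by
          rw [sig, sig, Finset.range_eq_Ico, Finset.range_eq_Ico]
          exact (Finset.sum_Ico_consecutive (pad n x) (n := B (2*(l+1)-1)) (Nat.zero_le _) (by omega)).symm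
        have hconst : ∑ w ∈ Finset.Ico (B (2*(l+1)-1)) (B (2*(l+1)) - 1), pad n x w
            = ∑ _w ∈ Finset.Ico (B (2*(l+1)-1)) (B (2*(l+1)) - 1), pad n x (B (2*(l+1)-1) - 1) :=
          Finset.sum_congr rfl (fun w hw => by
            rw [Finset.mem_Ico] at hw
            exact f4' w hw.1 (by omega))
        rw [hsplit, f2, hconst, Finset.sum_const, Nat.card_Ico, nsmul_eq_mul]
      have htk1 : 1 ≤ tk := by
        have := hlt (2*k-1) (2*k) (by omega) (le_refl _); omega
      have f6 : pad n x (B (2*(l+1)-1) - 1) = 0 := by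
        rcases Nat.lt_or_ge (l+1) k with hlt1 | hge1
        · have h3 := hc3 (l+1) (by omega) (by omega)
          rw [f5] at h3
          have hpos : (0:ℝ) ≤ ((B (2*(l+1)) - 1 - B (2*(l+1)-1) : ℕ) : ℝ) := Nat.cast_nonneg _
          nlinarith [h3, hpos]
        · have hlek : l + 1 = k := by omega
          subst hlek
          rcases Nat.eq_or_lt_of_le htk1 with ht1 | ht2
          · -- tk = 1
            have hb : B (2*(l+1)-1) = n - 1 := by omega
            have hfr : pad n x (n-1) = 0 :=
              hfree (n-1) (by omega) (Or.inr ⟨ht1.symm, rfl⟩)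
            rw [← f3, hb]
            exact hfr
          · -- tk ≥ 2
            have hcnt : B (2*(l+1)) - 1 - B (2*(l+1)-1) = tk - 1 := by omega
            have hne1 : B (2*(l+1)) - 1 = n - 1 := by omega
            have hrhs : pad n x (n-1) = pad n x (B (2*(l+1)-1) - 1) :=
              f4' (n-1) (by omega) (by omega)
            have h4 := hc4
            rw [← hne1, f5, hcnt, hne1, hrhs] at h4
            have hpos : (0:ℝ) < ((tk - 1 : ℕ) : ℝ) := by
              exact_mod_cast (by omega : 0 < tk - 1)
            nlinarith [h4, hpos]
      rcases Nat.lt_or_ge v (B (2*l)) with h | h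
      · exact IH v h
      · rcases Nat.lt_or_ge (v+1) (B (2*(l+1)-1)) with h2 | h2
        · exact f1 v h h2
        · rcases Nat.eq_or_lt_of_le h2 with h3 | h3
          · rw [show v = B (2*(l+1)-1) - 1 by omega]; exact f6
          · rw [f4' v (by omega) hv]; exact f6
  funext i
  have hkey := key k (le_refl _) i.val (by rw [hn]; exact i.isLt)
  rw [pad, dif_pos i.isLt] at hkey
  simpa using hkey

theorem free_vector
    (hk : 1 ≤ k) (tk : ℕ)
    (hB0 : B 0 = 0) (hn : B (2*k) = n)
    (hmono : ∀ p q, p ≤ q → q ≤ 2*k → B p ≤ B q)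
    (hlt : ∀ p q, p < q → q ≤ 2*k → B p < B q)
    (htk : B (2*k) = B (2*k-1) + tk)
    (v : ℕ) (hvn : v < n) (hv : Pfree n k tk B v) :
    ∃ w : Fin n → ℝ, Cond n k B w ∧
      (∀ u, u < n → Pfree n k tk B u → pad n w u = (if u = v then 1 else 0)) := by
  have hkn : B (2*k-1) < n := by
    have := hlt (2*k-1) (2*k) (by omega) (le_refl _); omega
  rcases hv with ⟨l0, hl01, hl02, hja, hjb⟩ | ⟨ht1, hveq⟩
  · -- case A : v is a non-last 0-block coordinate of block l0
    have hb0n : B (2*l0-1) ≤ n := by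
      have := hmono (2*l0-1) (2*k) (by omega) (le_refl _); omega
    have hb0k : B (2*l0-1) ≤ B (2*k-1) := hmono _ _ (by omega) (by omega)
    have hab : B (2*l0-2) < B (2*l0-1) := hlt _ _ (by omega) (by omega)
    set par := B (2*l0-1) - 1 with hpar
    have hjparne : v ≠ par := by omega
    have hparn : par < n := by omega
    refine ⟨tpv n v par 1 (-1), ⟨?_, ?_, ?_, ?_⟩, ?_⟩
    · -- C1
      intro l i h1 h2 hi1 hi2
      have hsep : B (2*l) ≤ B (2*l0-2) ∨ B (2*l0-1) ≤ B (2*l-1) := by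
        rcases Nat.lt_or_ge l l0 with h | h
        · exact Or.inl (hmono _ _ (by omega) (by omega))
        · exact Or.inr (hmono _ _ (by omega) (by omega))
      rw [pad_tpv n v par 1 (-1) hvn hparn, pad_tpv n v par 1 (-1) hvn hparn]
      rcases hsep with hc | hc
      · rw [if_neg (by omega), if_neg (by omega), if_neg (by omega), if_neg (by omega)]
      · rw [if_neg (by omega), if_neg (by omega), if_neg (by omega), if_neg (by omega)]
    · -- C2
      intro l h1 h2
      rw [sig_tpv n v par 1 (-1) hvn hparn hjparne, pad_tpv n v par 1 (-1) hvn hparn]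
      have hsep : B (2*l-1) < B (2*l0-2) ∨ B (2*l0-1) ≤ B (2*l-1) := by
        rcases Nat.lt_or_ge l l0 with h | h
        · exact Or.inl (hlt _ _ (by omega) (by omega))
        · exact Or.inr (hmono _ _ (by omega) (by omega))
      rcases hsep with hc | hc
      · rw [if_neg (by omega), if_neg (by omega), if_neg (by omega), if_neg (by omega)]
        norm_num
      · rw [if_pos (by omega), if_pos (by omega), if_neg (by omega), if_neg (by omega)]
        norm_num
    · -- C3
      intro l h1 h2
      rw [sig_tpv n v par 1 (-1) hvn hparn hjparne]
      have hsep : B (2*l) ≤ B (2*l0-2) ∨ B (2*l0-1) < B (2*l) := by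
        rcases Nat.lt_or_ge l l0 with h | h
        · exact Or.inl (hmono _ _ (by omega) (by omega))
        · exact Or.inr (hlt _ _ (by omega) (by omega))
      rcases hsep with hc | hc
      · rw [if_neg (by omega), if_neg (by omega)]
        norm_num
      · rw [if_pos (by omega), if_pos (by omega)]
        norm_num
    · -- C4
      rw [sig_tpv n v par 1 (-1) hvn hparn hjparne, pad_tpv n v par 1 (-1) hvn hparn]
      rw [if_pos (by omega), if_pos (by omega), if_neg (by omega), if_neg (by omega)]
      norm_num
    · -- restriction
      intro u hun hu
      rw [pad_tpv n v par 1 (-1) hvn hparn]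
      by_cases huv : u = v
      · rw [if_pos huv, if_pos huv]
      · rw [if_neg huv, if_neg huv]
        have hupar : u ≠ par := by
          intro hup
          rcases hu with ⟨l', h1, h2, h3, h4⟩ | ⟨ht1, hu1⟩
          · rcases lt_trichotomy l' l0 with h | h | h
            · have := hmono (2*l'-1) (2*l0-2) (by omega) (by omega); omega
            · subst h; omega
            · have := hmono (2*l0-1) (2*l'-2) (by omega) (by omega); omega
          · omega
        rw [if_neg hupar]
  · -- case B : tk = 1 and v = n-1
    subst hveq
    have hbk : B (2*k) = B (2*k-1) + 1 := by omega
    have hb1 : 1 ≤ B (2*k-1) := by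
      have := hlt 0 (2*k-1) (by omega) (by omega); omega
    have hveq2 : n - 1 = B (2*k-1) := by omega
    set par := B (2*k-1) - 1 with hpar
    have hn2 : 2 ≤ n := by omega
    have hjparne : n - 1 ≠ par := by omega
    have hparn : par < n := by omega
    refine ⟨tpv n (n-1) par 1 1, ⟨?_, ?_, ?_, ?_⟩, ?_⟩
    · -- C1
      intro l i h1 h2 hi1 hi2
      rcases Nat.eq_or_lt_of_le h2 with h | h
      · subst h; omega
      · have hs1 := hmono (2*l) (2*k-2) (by omega) (by omega)
        have hs2 := hlt (2*k-2) (2*k-1) (by omega) (by omega)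
        rw [pad_tpv n (n-1) par 1 1 (by omega) hparn, pad_tpv n (n-1) par 1 1 (by omega) hparn]
        rw [if_neg (by omega), if_neg (by omega), if_neg (by omega), if_neg (by omega)]
    · -- C2
      intro l h1 h2
      rw [sig_tpv n (n-1) par 1 1 (by omega) hparn hjparne,
        pad_tpv n (n-1) par 1 1 (by omega) hparn]
      rcases Nat.eq_or_lt_of_le h2 with h | h
      · subst h
        rw [if_neg (by omega), if_pos (by omega), if_pos (by omega)]
        norm_num
      · have hs1 := hlt (2*l-1) (2*k-2) (by omega) (by omega)
        have hs2 := hlt (2*k-2) (2*k-1) (by omega) (by omega)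
        rw [if_neg (by omega), if_neg (by omega), if_neg (by omega), if_neg (by omega)]
        norm_num
    · -- C3
      intro l h1 h2
      rw [sig_tpv n (n-1) par 1 1 (by omega) hparn hjparne]
      have hs1 := hmono (2*l) (2*k-1) (by omega) (by omega)
      rw [if_neg (by omega), if_neg (by omega)]
      norm_num
    · -- C4
      rw [sig_tpv n (n-1) par 1 1 (by omega) hparn hjparne,
        pad_tpv n (n-1) par 1 1 (by omega) hparn]
      rw [if_neg (by omega), if_pos (by omega), if_pos (by omega)]
      norm_num
    · -- restriction
      intro u hun hu
      rw [pad_tpv n (n-1) par 1 1 (by omega) hparn]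
      by_cases huv : u = n - 1
      · rw [if_pos huv, if_pos huv]
      · rw [if_neg huv, if_neg huv]
        have hupar : u ≠ par := by
          intro hup
          rcases hu with ⟨l', h1, h2, h3, h4⟩ | ⟨ht1', hu1⟩
          · have := hmono (2*l'-1) (2*k-1) (by omega) (by omega); omega
          · omega
        rw [if_neg hupar]

theorem dim_ker
    (hk : 1 ≤ k) (tk : ℕ)
    (hB0 : B 0 = 0) (hn : B (2*k) = n)
    (hmono : ∀ p q, p ≤ q → q ≤ 2*k → B p ≤ B q)
    (hlt : ∀ p q, p < q → q ≤ 2*k → B p < B q)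
    (htk : B (2*k) = B (2*k-1) + tk)
    (hβ1 : ∀ l, 1 ≤ l → l ≤ k → ∀ j, B (2*l-2) < j → j ≤ B (2*l-1) → β j = 1)
    (hβ2 : ∀ l, 1 ≤ l → l ≤ k → ∀ j, B (2*l-1) < j → j ≤ B (2*l) → β j = -1)
    (hM : ∀ a b : Fin n, M a b = if a = b then 1 else β (max a.val b.val + 1))
    [DecidablePred (Pfree n k tk B)] :
    Module.finrank ℝ (LinearMap.ker M.mulVecLin)
      = (Finset.univ.filter (fun i : Fin n => Pfree n k tk B i.val)).card := by
  classical
  set F : Finset (Fin n) := Finset.univ.filter (fun i : Fin n => Pfree n k tk B i.val) with hF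
  have hmemF : ∀ i : Fin n, i ∈ F ↔ Pfree n k tk B i.val := by
    intro i; rw [hF, Finset.mem_filter]; simp
  set L : (LinearMap.ker M.mulVecLin) →ₗ[ℝ] ((↥F) → ℝ) :=
    (LinearMap.funLeft ℝ ℝ (fun i : ↥F => (i : Fin n))).comp
      (LinearMap.ker M.mulVecLin).subtype with hL
  have hLapp : ∀ (z : LinearMap.ker M.mulVecLin) (i : ↥F), L z i = z.1 (i : Fin n) := by
    intro z i; rfl
  have hker : ∀ x : Fin n → ℝ, M *ᵥ x = 0 ↔ Cond n k B x :=
    ker_iff k n B β M hk hB0 hn hmono hlt hβ1 hβ2 hM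
  have hinj : Function.Injective L := by
    intro z1 z2 h12
    have hz : M *ᵥ (z1.1 - z2.1) = 0 := by
      have h1 : M.mulVecLin z1.1 = 0 := z1.2
      have h2 : M.mulVecLin z2.1 = 0 := z2.2
      have := map_sub M.mulVecLin z1.1 z2.1
      rw [h1, h2, sub_zero] at this
      rw [← Matrix.mulVecLin_apply, this]
    have hcond := (hker _).mp hz
    have hzero : ∀ u, u < n → Pfree n k tk B u → pad n (z1.1 - z2.1) u = 0 := by
      intro u hu hp
      have hmem : (⟨u, hu⟩ : Fin n) ∈ F := (hmemF _).mpr hp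
      have := congrFun h12 ⟨⟨u, hu⟩, hmem⟩
      rw [hLapp, hLapp] at this
      rw [pad, dif_pos hu]
      simp only [Pi.sub_apply]
      rw [this]
      ring
    have hzz := cond_zero k n B hk tk hB0 hn hmono hlt htk _ hcond hzero
    have : z1.1 = z2.1 := by
      have := sub_eq_zero.mp hzz
      exact this
    exact Subtype.ext this
  have hsurj : Function.Surjective L := by
    intro g
    have hw : ∀ i : ↥F, ∃ w : Fin n → ℝ, Cond n k B w ∧
        (∀ u, u < n → Pfree n k tk B u → pad n w u = (if u = (i : Fin n).val then 1 else 0)) :=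
      fun i => free_vector k n B hk tk hB0 hn hmono hlt htk (i : Fin n).val (i : Fin n).isLt
        ((hmemF _).mp i.2)
    choose w hw1 hw2 using hw
    set xv : Fin n → ℝ := ∑ i : ↥F, g i • w i with hxv
    have hxker : M.mulVecLin xv = 0 := by
      rw [hxv, map_sum]
      apply Finset.sum_eq_zero
      intro i _
      rw [_root_.map_smul]
      have : M.mulVecLin (w i) = 0 := by
        rw [Matrix.mulVecLin_apply]
        exact (hker _).mpr (hw1 i)
      rw [this, smul_zero]
    refine ⟨⟨xv, hxker⟩, ?_⟩
    funext i
    show xv (i : Fin n) = g i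
    have hxvi : xv (i : Fin n) = ∑ u : ↥F, g u * w u (i : Fin n) := by
      rw [hxv]
      rw [Finset.sum_apply]
      apply Finset.sum_congr rfl
      intro u _
      simp
    rw [hxvi]
    have hterm : ∀ u : ↥F, g u * w u (i : Fin n) = if u = i then g u else 0 := by
      intro u
      have h1 := hw2 u (i : Fin n).val (i : Fin n).isLt ((hmemF _).mp i.2)
      rw [pad, dif_pos (i : Fin n).isLt] at h1
      have h2 : w u (i : Fin n) = if (i : Fin n).val = (u : Fin n).val then 1 else 0 := by
        rw [← h1]
      rw [h2]
      by_cases h : u = i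
      · rw [if_pos h, if_pos (by rw [h]), mul_one]
      · rw [if_neg h, if_neg (by
          intro hcon
          exact h (Subtype.ext (Fin.ext hcon.symm))), mul_zero]
    rw [Finset.sum_congr rfl (fun u _ => hterm u), Finset.sum_ite_eq' Finset.univ i (fun u => g u)]
    simp
  have hequiv := LinearEquiv.ofBijective L ⟨hinj, hsurj⟩
  rw [LinearEquiv.finrank_eq hequiv, Module.finrank_pi, Fintype.card_coe]

theorem free_card
    (hk : 1 ≤ k) (tk : ℕ) (htk1 : 1 ≤ tk)
    (hB0 : B 0 = 0) (hn : B (2*k) = n)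
    (hmono : ∀ p q, p ≤ q → q ≤ 2*k → B p ≤ B q)
    (hlt : ∀ p q, p < q → q ≤ 2*k → B p < B q)
    (htk : B (2*k) = B (2*k-1) + tk)
    [DecidablePred (Pfree n k tk B)] :
    (Finset.univ.filter (fun i : Fin n => Pfree n k tk B i.val)).card
      = (∑ l ∈ Finset.Icc 1 k, (B (2*l-1) - B (2*l-2) - 1)) + (if tk = 1 then 1 else 0) := by
  classical
  have hn1 : 1 ≤ n := by
    have := hlt 0 (2*k) (by omega) (le_refl _); omega
  have h1 : (Finset.univ.filter (fun i : Fin n => Pfree n k tk B i.val)).card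
      = ((Finset.range n).filter (fun v => Pfree n k tk B v)).card := by
    apply Finset.card_bij (fun i _ => i.val)
    · intro a ha
      rw [Finset.mem_filter] at ha ⊢
      exact ⟨Finset.mem_range.mpr a.isLt, ha.2⟩
    · intro a _ b _ h
      exact Fin.ext h
    · intro b hb
      rw [Finset.mem_filter, Finset.mem_range] at hb
      exact ⟨⟨b, hb.1⟩, Finset.mem_filter.mpr ⟨Finset.mem_univ _, hb.2⟩, rfl⟩
  set T : Finset ℕ := (Finset.Icc 1 k).biUnion (fun l => Finset.Ico (B (2*l-2)) (B (2*l-1) - 1))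
    with hT
  have hTdisj : ∀ l1 ∈ Finset.Icc 1 k, ∀ l2 ∈ Finset.Icc 1 k, l1 ≠ l2 →
      Disjoint (Finset.Ico (B (2*l1-2)) (B (2*l1-1) - 1)) (Finset.Ico (B (2*l2-2)) (B (2*l2-1) - 1)) := by
    intro l1 hl1 l2 hl2 hne
    rw [Finset.mem_Icc] at hl1 hl2
    rw [Finset.disjoint_left]
    intro a ha1 ha2
    rw [Finset.mem_Ico] at ha1 ha2
    rcases Nat.lt_or_ge l1 l2 with h | h
    · have := hmono (2*l1-1) (2*l2-2) (by omega) (by omega)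
      omega
    · have := hmono (2*l2-1) (2*l1-2) (by omega) (by omega)
      omega
  have hTcard : T.card = ∑ l ∈ Finset.Icc 1 k, (B (2*l-1) - B (2*l-2) - 1) := by
    rw [hT, Finset.card_biUnion hTdisj]
    apply Finset.sum_congr rfl
    intro l _
    rw [Nat.card_Ico]
    omega
  have hmemT : ∀ v, v ∈ T ↔ ∃ l, 1 ≤ l ∧ l ≤ k ∧ B (2*l-2) ≤ v ∧ v+1 < B (2*l-1) := by
    intro v
    rw [hT, Finset.mem_biUnion]
    constructor
    · rintro ⟨l, hl, hv⟩
      rw [Finset.mem_Icc] at hl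
      rw [Finset.mem_Ico] at hv
      exact ⟨l, hl.1, hl.2, hv.1, by omega⟩
    · rintro ⟨l, h1, h2, h3, h4⟩
      exact ⟨l, Finset.mem_Icc.mpr ⟨h1, h2⟩, Finset.mem_Ico.mpr ⟨h3, by omega⟩⟩
  have hTn : ∀ v ∈ T, v < n := by
    intro v hv
    obtain ⟨l, h1, h2, h3, h4⟩ := (hmemT v).mp hv
    have := hmono (2*l-1) (2*k) (by omega) (le_refl _)
    omega
  rcases Nat.eq_or_lt_of_le htk1 with ht1 | ht2
  · -- tk = 1
    have hbk : B (2*k-1) = n - 1 := by omega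
    have hnot : (n-1) ∉ T := by
      intro hcon
      obtain ⟨l, h1, h2, h3, h4⟩ := (hmemT _).mp hcon
      have := hmono (2*l-1) (2*k-1) (by omega) (by omega)
      omega
    have heq : (Finset.range n).filter (fun v => Pfree n k tk B v) = insert (n-1) T := by
      ext v
      rw [Finset.mem_filter, Finset.mem_range, Finset.mem_insert, hmemT]
      constructor
      · rintro ⟨hvn, hl | hr⟩
        · exact Or.inr hl
        · exact Or.inl hr.2
      · rintro (h | h)
        · exact ⟨by omega, Or.inr ⟨ht1.symm, h⟩⟩
        · refine ⟨hTn v ((hmemT v).mpr h), Or.inl h⟩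
    rw [h1, heq, Finset.card_insert_of_notMem hnot, hTcard, if_pos ht1.symm]
  · -- tk ≥ 2
    have heq : (Finset.range n).filter (fun v => Pfree n k tk B v) = T := by
      ext v
      rw [Finset.mem_filter, Finset.mem_range, hmemT]
      constructor
      · rintro ⟨hvn, hl | hr⟩
        · exact hl
        · omega
      · intro h
        exact ⟨hTn v ((hmemT v).mpr h), Or.inl h⟩
    rw [h1, heq, hTcard, if_neg (by omega)]
    omega

end Main

end Stmt10


open Finset in
theorem stmt_10
    (k : ℕ) (hk : 1 ≤ k) (s t : ℕ → ℕ)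
    (hs : ∀ i, 1 ≤ i → i ≤ k → 1 ≤ s i) (ht : ∀ i, 1 ≤ i → i ≤ k → 1 ≤ t i)
    (c : ℕ → ℕ)
    (hc : ∀ i, 1 ≤ i → i ≤ k → c (2 * i - 1) = s i ∧ c (2 * i) = t i)
    (B : ℕ → ℕ) (hB0 : B 0 = 0) (hB : ∀ p, B (p + 1) = B p + c (p + 1))
    (n : ℕ) (hn : n = B (2 * k))
    (β : ℕ → ℝ)
    (hβ : ∀ p j, 1 ≤ p → p ≤ 2 * k → B (p - 1) < j → j ≤ B p →
      β j = (-1 : ℝ) ^ (p + 1))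
    (S : Matrix (Fin n) (Fin n) ℝ)
    (hS : ∀ i j : Fin n, S i j = if i = j then 0 else β (max (i : ℕ) (j : ℕ) + 1)) :
    (1 < t k → S.charpoly.rootMultiplicity (-1) =
      (∑ i ∈ Finset.Icc 1 k, s i) - k) ∧
    (t k = 1 → S.charpoly.rootMultiplicity (-1) =
      (∑ i ∈ Finset.Icc 1 k, s i) - k + 1) := by
  classical
  have hcpos : ∀ q, 1 ≤ q → q ≤ 2*k → 1 ≤ c q := by
    intro q h1 h2
    rcases Nat.even_or_odd q with ⟨i, hi⟩ | ⟨i, hi⟩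
    · have h3 : c (2*i) = t i := (hc i (by omega) (by omega)).2
      rw [show q = 2*i by omega, h3]
      exact ht i (by omega) (by omega)
    · have h3 : c (2*(i+1) - 1) = s (i+1) := (hc (i+1) (by omega) (by omega)).1
      rw [show q = 2*(i+1)-1 by omega, h3]
      exact hs (i+1) (by omega) (by omega)
  have hstep : ∀ p, p < 2*k → B p < B (p+1) := by
    intro p hp
    rw [hB p]
    have := hcpos (p+1) (by omega) (by omega)
    omega
  have hmono : ∀ p q, p ≤ q → q ≤ 2*k → B p ≤ B q := by
    intro p q hpq hq
    induction q with
    | zero => rw [show p = 0 by omega]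
    | succ r ih =>
      rcases Nat.eq_or_lt_of_le hpq with h | h
      · rw [h]
      · exact le_trans (ih (by omega) (by omega)) (le_of_lt (hstep r (by omega)))
  have hltB : ∀ p q, p < q → q ≤ 2*k → B p < B q := by
    intro p q h hq
    have h1 := hstep (q-1) (by omega)
    rw [show q-1+1 = q by omega] at h1
    exact lt_of_le_of_lt (hmono p (q-1) (by omega) (by omega)) h1
  have hnB : B (2*k) = n := hn.symm
  have hβ1 : ∀ l, 1 ≤ l → l ≤ k → ∀ j, B (2*l-2) < j → j ≤ B (2*l-1) → β j = 1 := by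
    intro l h1 h2 j hj1 hj2
    have h3 := hβ (2*l-1) j (by omega) (by omega)
      (by rw [show 2*l-1-1 = 2*l-2 by omega]; exact hj1) hj2
    rw [h3, show 2*l-1+1 = 2*l by omega]
    exact Even.neg_one_pow ⟨l, by omega⟩
  have hβ2 : ∀ l, 1 ≤ l → l ≤ k → ∀ j, B (2*l-1) < j → j ≤ B (2*l) → β j = -1 := by
    intro l h1 h2 j hj1 hj2
    have h3 := hβ (2*l) j (by omega) (by omega) hj1 hj2
    rw [h3]
    exact Odd.neg_one_pow ⟨l, by omega⟩
  have htkB : B (2*k) = B (2*k-1) + t k := by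
    have h1 := hB (2*k-1)
    rw [show 2*k-1+1 = 2*k by omega] at h1
    rw [h1, (hc k hk (le_refl _)).2]
  have hM : ∀ a b : Fin n, (S + 1) a b = if a = b then 1 else β (max a.val b.val + 1) := by
    intro a b
    by_cases h : a = b
    · rw [h]
      simp [Matrix.add_apply, hS, Matrix.one_apply]
    · simp [Matrix.add_apply, hS, Matrix.one_apply, h]
  have hherm : S.IsHermitian := by
    show Sᴴ = S
    ext i j
    rw [Matrix.conjTranspose_apply, hS, hS]
    by_cases h : i = j
    · simp [h]
    · rw [if_neg (Ne.symm h), if_neg h, Nat.max_comm]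
      simp
  have hμ : S - (-1 : ℝ) • (1 : Matrix (Fin n) (Fin n) ℝ) = S + 1 := by
    ext i j
    simp only [Matrix.sub_apply, Matrix.add_apply, Matrix.smul_apply, smul_eq_mul]
    ring
  have hmain := herm_mult n S hherm (-1)
  rw [hμ] at hmain
  letI : DecidablePred (Stmt10.Pfree n k (t k) B) := Classical.decPred _
  have htkpos : 1 ≤ t k := ht k hk (le_refl _)
  have hdim := Stmt10.dim_ker k n B β (S + 1) hk (t k) hB0 hnB hmono hltB htkB hβ1 hβ2 hM
  have hcardF := Stmt10.free_card k n B hk (t k) htkpos hB0 hnB hmono hltB htkB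
  have hsl : ∀ l ∈ Finset.Icc 1 k, B (2*l-1) - B (2*l-2) - 1 = s l - 1 := by
    intro l hl
    rw [Finset.mem_Icc] at hl
    have h1 := hB (2*l-2)
    rw [show 2*l-2+1 = 2*l-1 by omega] at h1
    rw [h1, (hc l hl.1 hl.2).1]
    omega
  have hsum1 : ∑ l ∈ Finset.Icc 1 k, (B (2*l-1) - B (2*l-2) - 1)
      = ∑ l ∈ Finset.Icc 1 k, (s l - 1) := Finset.sum_congr rfl hsl
  have hsum2 : (∑ l ∈ Finset.Icc 1 k, (s l - 1)) + k = ∑ l ∈ Finset.Icc 1 k, s l := by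
    have hcongr : ∀ l ∈ Finset.Icc 1 k, s l - 1 + 1 = s l := by
      intro l hl
      rw [Finset.mem_Icc] at hl
      have := hs l hl.1 hl.2
      omega
    have hcount : (Finset.Icc 1 k).card = k := by
      rw [Nat.card_Icc]
      omega
    calc (∑ l ∈ Finset.Icc 1 k, (s l - 1)) + k
        = (∑ l ∈ Finset.Icc 1 k, (s l - 1)) + ∑ _l ∈ Finset.Icc 1 k, 1 := by
          rw [Finset.sum_const, smul_eq_mul, mul_one, hcount]
      _ = ∑ l ∈ Finset.Icc 1 k, (s l - 1 + 1) := Finset.sum_add_distrib.symm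
      _ = ∑ l ∈ Finset.Icc 1 k, s l := Finset.sum_congr rfl hcongr
  have hfinal : S.charpoly.rootMultiplicity (-1)
      = (∑ l ∈ Finset.Icc 1 k, (s l - 1)) + (if t k = 1 then 1 else 0) := by
    rw [hmain, hdim, hcardF, hsum1]
  constructor
  · intro h2
    rw [hfinal, if_neg (by omega)]
    omega
  · intro h2
    rw [hfinal, if_pos h2]
    omega
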